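/- Let p be a prime with p ≡ 1 (mod 8). Then 2 is a fourth power modulo p (i.e., there exists an integer z with z⁴ ≡ 2 (mod p)) if and only if there exist integers x and y with p = x² + 64y². -/

import Mathlib

lemma chi8_pow (s m : ℕ) (hs : s % 2 = 1) (h : s ^ 2 = 8 * m + 1) :
    (ZMod.χ₈ (s : ZMod 8) : ℤ) = (-1) ^ m := by
  have h8 : s % 8 = 1 ∨ s % 8 = 3 ∨ s % 8 = 5 ∨ s % 8 = 7 := by omega
  have hdm := Nat.div_add_mod s 8
  set k := s / 8 with hk
  rw [ZMod.χ₈_nat_eq_if_mod_eight, if_neg (by omega)]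
  rcases h8 with ht | ht | ht | ht
  · have hs' : s = 8 * k + 1 := by omega
    have e : 64 * (k * k) + 16 * k + 1 = 8 * m + 1 := by rw [← h, hs']; ring
    have hm : m % 2 = 0 := by generalize k * k = K at e; omega
    rw [if_pos (Or.inl ht), Even.neg_one_pow (Nat.even_iff.mpr hm)]
  · have hs' : s = 8 * k + 3 := by omega
    have e : 64 * (k * k) + 48 * k + 9 = 8 * m + 1 := by rw [← h, hs']; ring
    have hm : m % 2 = 1 := by generalize k * k = K at e; omega
    rw [if_neg (by omega), Odd.neg_one_pow (Nat.odd_iff.mpr hm)]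
  · have hs' : s = 8 * k + 5 := by omega
    have e : 64 * (k * k) + 80 * k + 25 = 8 * m + 1 := by rw [← h, hs']; ring
    have hm : m % 2 = 1 := by generalize k * k = K at e; omega
    rw [if_neg (by omega), Odd.neg_one_pow (Nat.odd_iff.mpr hm)]
  · have hs' : s = 8 * k + 7 := by omega
    have e : 64 * (k * k) + 112 * k + 49 = 8 * m + 1 := by rw [← h, hs']; ring
    have hm : m % 2 = 0 := by generalize k * k = K at e; omega
    rw [if_pos (Or.inr ht), Even.neg_one_pow (Nat.even_iff.mpr hm)]

lemma key_lemma (p r a c : ℕ) (hp : p.Prime) (hpr : p = 8 * r + 1)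
    (heq : a ^ 2 + 16 * c ^ 2 = p) (ha : a % 2 = 1) :
    (2 : ZMod p) ^ (2 * r) = (-1 : ZMod p) ^ (a * c) := by
  haveI : Fact p.Prime := ⟨hp⟩
  have hp2 : 2 ≤ p := hp.two_le
  have hc1 : 1 ≤ c := by
    rcases Nat.eq_zero_or_pos c with h0 | h; swap; · exact h
    exfalso
    subst h0
    have hap : a ∣ p := ⟨a, by rw [← heq]; ring⟩
    rcases hp.eq_one_or_self_of_dvd a hap with h1 | h1
    · subst h1; simp at heq; omega
    · subst h1; nlinarith
  have ha1 : 1 ≤ a := by omega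
  set b := 4 * c with hb
  have heq' : a ^ 2 + b ^ 2 = p := by rw [hb, ← heq]; ring
  have hcop : Nat.Coprime a b := by
    set g := Nat.gcd a b with hg
    have hga : g ∣ a := Nat.gcd_dvd_left a b
    have hgb : g ∣ b := Nat.gcd_dvd_right a b
    have hg2 : g ^ 2 ∣ p := by
      rw [← heq']
      exact dvd_add (pow_dvd_pow_of_dvd hga 2) (pow_dvd_pow_of_dvd hgb 2)
    rcases hp.eq_one_or_self_of_dvd _ hg2 with h1 | h1
    · exact (pow_eq_one_iff_left (by norm_num)).mp h1
    · exfalso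
      have hgp : g ∣ p := by rw [← h1]; exact dvd_pow_self g (by norm_num)
      rcases hp.eq_one_or_self_of_dvd g hgp with h2 | h2
      · rw [h2] at h1; simp at h1; omega
      · rw [h2] at h1; nlinarith
  set s := a + b with hs
  have hs2 : s ^ 2 = p + 8 * (a * c) := by rw [hs, hb, ← heq]; ring
  have hsodd : s % 2 = 1 := by omega
  have hac_le : 8 * (a * c) ≤ p := by
    zify
    have hz : (a : ℤ) ^ 2 + 16 * (c : ℤ) ^ 2 = p := by exact_mod_cast heq
    nlinarith [sq_nonneg ((a : ℤ) - 4 * c)]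
  have hslt : s < p := by nlinarith
  have hspos : 0 < s := by omega
  have hsp : Nat.Coprime p s :=
    (Nat.Prime.coprime_iff_not_dvd hp).mpr fun hd => absurd (Nat.le_of_dvd hspos hd) (not_le.mpr hslt)
  have hps4 : p % 4 = 1 := by omega
  have hsOdd : Odd s := Nat.odd_iff.mpr hsodd
  have hpOdd : Odd p := Nat.odd_iff.mpr (by omega)
  have heqz : (a : ℤ) ^ 2 + (b : ℤ) ^ 2 = p := by exact_mod_cast heq'
  have hgcd1 : Int.gcd ((a : ℤ) - b) s = 1 := by
    obtain ⟨u, v, huv⟩ := Nat.isCoprime_iff_coprime.mpr hcop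
    have hd1 : (Int.gcd ((a : ℤ) - b) s : ℤ) ∣ ((a : ℤ) - b) := Int.gcd_dvd_left _ _
    have hd2 : (Int.gcd ((a : ℤ) - b) s : ℤ) ∣ (s : ℤ) := Int.gcd_dvd_right _ _
    have hcomb : (Int.gcd ((a : ℤ) - b) s : ℤ) ∣ 2 := by
      have h2 : (u - v) * ((a : ℤ) - b) + (u + v) * s = 2 := by
        push_cast [hs]; linear_combination 2 * huv
      calc (Int.gcd ((a : ℤ) - b) s : ℤ)
          ∣ (u - v) * ((a : ℤ) - b) + (u + v) * s :=
            dvd_add (Dvd.dvd.mul_left hd1 _) (Dvd.dvd.mul_left hd2 _)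
        _ = 2 := h2
    have hg2 : Int.gcd ((a : ℤ) - b) s ∣ 2 := by exact_mod_cast hcomb
    have hgs : Int.gcd ((a : ℤ) - b) s ∣ s := by exact_mod_cast hd2
    rcases (Nat.dvd_prime Nat.prime_two).mp hg2 with h1 | h1
    · exact h1
    · exfalso; rw [h1] at hgs; omega
  have hgcdba : Int.gcd (b : ℤ) a = 1 := by
    have h1 : Nat.gcd b a = 1 := hcop.symm
    simpa [Int.gcd_natCast_natCast] using h1
  have hgcd2s : Int.gcd 2 (s : ℤ) = 1 := by
    have h1 : Nat.gcd 2 s = 1 := hsOdd.coprime_two_left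
    simpa [Int.gcd] using h1
  have hgcdsp : Int.gcd (s : ℤ) p = 1 := by
    have h1 : Nat.gcd s p = 1 := hsp.symm
    simpa [Int.gcd_natCast_natCast] using h1
  have h2p : jacobiSym 2 s * jacobiSym (p : ℤ) s = 1 := by
    have hm : (2 * (p : ℤ)) % s = (((a : ℤ) - b) ^ 2) % s := by
      have h2 : 2 * (p : ℤ) = ((a : ℤ) - b) ^ 2 + s * s := by
        push_cast [hs]; linear_combination -2 * heqz
      rw [h2, Int.add_mul_emod_self_left]
    calc jacobiSym 2 s * jacobiSym (p : ℤ) s = jacobiSym (2 * p) s := (jacobiSym.mul_left 2 p s).symm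
      _ = jacobiSym (((a : ℤ) - b) ^ 2) s := jacobiSym.mod_left' hm
      _ = 1 := jacobiSym.sq_one' hgcd1
  have hJps : jacobiSym (p : ℤ) s = jacobiSym 2 s := by
    have hsq := jacobiSym.sq_one hgcd2s
    calc jacobiSym (p : ℤ) s = jacobiSym 2 s ^ 2 * jacobiSym (p : ℤ) s := by rw [hsq, one_mul]
      _ = jacobiSym 2 s * (jacobiSym 2 s * jacobiSym (p : ℤ) s) := by ring
      _ = jacobiSym 2 s := by rw [h2p, mul_one]
  have hJs : jacobiSym (s : ℤ) p = (ZMod.χ₈ (s : ZMod 8) : ℤ) := by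
    rw [← jacobiSym.quadratic_reciprocity_one_mod_four hps4 hsOdd, hJps, jacobiSym.at_two hsOdd]
  have hJ2 : jacobiSym 2 p = 1 := by
    rw [jacobiSym.at_two hpOdd, ZMod.χ₈_nat_mod_eight]
    have h1 : p % 8 = 1 := by omega
    rw [h1]; decide
  have hJa : jacobiSym (a : ℤ) p = 1 := by
    have haOdd : Odd a := Nat.odd_iff.mpr ha
    rw [← jacobiSym.quadratic_reciprocity_one_mod_four hps4 haOdd]
    have hm : ((p : ℤ)) % a = (((b : ℤ)) ^ 2) % a := by
      have h1 : (p : ℤ) = (b : ℤ) ^ 2 + a * a := by linear_combination -heqz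
      rw [h1, Int.add_mul_emod_self_left]
    rw [jacobiSym.mod_left' hm, jacobiSym.sq_one' hgcdba]
  have hJb : jacobiSym (b : ℤ) p = 1 := by
    have hm : (2 * a * b : ℤ) % p = ((s : ℤ) ^ 2) % p := by
      have h1 : (s : ℤ) ^ 2 = 2 * a * b + p * 1 := by push_cast [hs]; linear_combination heqz
      rw [h1, Int.add_mul_emod_self_left]
    have hprod : jacobiSym 2 p * jacobiSym (a : ℤ) p * jacobiSym (b : ℤ) p = 1 := by
      calc jacobiSym 2 p * jacobiSym (a : ℤ) p * jacobiSym (b : ℤ) p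
          = jacobiSym (2 * a * b) p := by rw [← jacobiSym.mul_left, ← jacobiSym.mul_left]
        _ = jacobiSym ((s : ℤ) ^ 2) p := jacobiSym.mod_left' hm
        _ = 1 := jacobiSym.sq_one' hgcdsp
    rw [hJ2, hJa] at hprod; simpa using hprod
  have hhalf : p / 2 = 4 * r := by omega
  have E : ∀ x : ℤ, ((jacobiSym x p : ℤ) : ZMod p) = (x : ZMod p) ^ (4 * r) := by
    intro x
    rw [← jacobiSym.legendreSym.to_jacobiSym, legendreSym.eq_pow, hhalf]
  have hp0 : ((p : ℕ) : ZMod p) = 0 := ZMod.natCast_self p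
  have h2ab : ((s : ZMod p)) ^ 2 = 2 * (a : ZMod p) * b := by
    have h1 : ((s ^ 2 : ℕ) : ZMod p) = ((p + 8 * (a * c) : ℕ) : ZMod p) := by rw [hs2]
    push_cast at h1
    rw [hp0] at h1
    push_cast [hb]
    linear_combination h1
  have ha2 : (a : ZMod p) ^ 2 = -((b : ZMod p)) ^ 2 := by
    have h1 : ((a ^ 2 + b ^ 2 : ℕ) : ZMod p) = ((p : ℕ) : ZMod p) := by rw [heq']
    push_cast at h1
    rw [hp0] at h1
    linear_combination h1
  have hEs : (s : ZMod p) ^ (4 * r) = ((ZMod.χ₈ (s : ZMod 8) : ℤ) : ZMod p) := by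
    have h1 := E (s : ℤ)
    rw [hJs] at h1
    push_cast at h1 ⊢
    linear_combination -h1
  have hEb : (b : ZMod p) ^ (4 * r) = 1 := by
    have h1 := E (b : ℤ)
    rw [hJb] at h1
    push_cast at h1
    linear_combination -h1
  have step1 : (2 : ZMod p) ^ (2 * r) * ((a : ZMod p) * b) ^ (2 * r)
      = ((ZMod.χ₈ (s : ZMod 8) : ℤ) : ZMod p) := by
    rw [← hEs]
    calc (2 : ZMod p) ^ (2 * r) * ((a : ZMod p) * b) ^ (2 * r)
        = (2 * (a : ZMod p) * b) ^ (2 * r) := by ring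
      _ = ((s : ZMod p) ^ 2) ^ (2 * r) := by rw [h2ab]
      _ = (s : ZMod p) ^ (4 * r) := by ring
  have step2 : ((a : ZMod p) * b) ^ (2 * r) = (-1 : ZMod p) ^ r := by
    have hab2 : ((a : ZMod p) * b) ^ 2 = -((b : ZMod p) ^ 4) := by
      have h1 : ((a : ZMod p) * b) ^ 2 = (a : ZMod p) ^ 2 * (b : ZMod p) ^ 2 := by ring
      rw [h1, ha2]; ring
    calc ((a : ZMod p) * b) ^ (2 * r) = (((a : ZMod p) * b) ^ 2) ^ r := by
          ring
      _ = (-((b : ZMod p) ^ 4)) ^ r := by rw [hab2]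
      _ = (-1 : ZMod p) ^ r * ((b : ZMod p) ^ 4) ^ r := by rw [neg_pow]
      _ = (-1 : ZMod p) ^ r * (b : ZMod p) ^ (4 * r) := by ring
      _ = (-1 : ZMod p) ^ r := by rw [hEb, mul_one]
  have step3 : ((ZMod.χ₈ (s : ZMod 8) : ℤ) : ZMod p) = (-1 : ZMod p) ^ (r + a * c) := by
    have h1 := chi8_pow s (r + a * c) hsodd (by omega)
    rw [h1]
    push_cast
    ring
  have hneg : ((-1 : ZMod p)) ^ r * (-1 : ZMod p) ^ r = 1 := by
    rw [← mul_pow]; norm_num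
  have hh : ((-1 : ZMod p)) ^ (r + a * c) * (-1 : ZMod p) ^ r = (-1 : ZMod p) ^ (a * c) := by
    rw [← pow_add]
    have h3 : r + a * c + r = 2 * r + a * c := by ring
    rw [h3, pow_add, pow_mul]
    norm_num
  calc (2 : ZMod p) ^ (2 * r)
      = (2 : ZMod p) ^ (2 * r) * ((-1 : ZMod p) ^ r * (-1 : ZMod p) ^ r) := by rw [hneg, mul_one]
    _ = ((2 : ZMod p) ^ (2 * r) * ((a : ZMod p) * b) ^ (2 * r)) * (-1 : ZMod p) ^ r := by
        rw [step2]; ring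
    _ = (-1 : ZMod p) ^ (r + a * c) * (-1 : ZMod p) ^ r := by rw [step1, step3]
    _ = (-1 : ZMod p) ^ (a * c) := hh

lemma pow_four_exists (p r : ℕ) (hp : p.Prime) (hpr : p = 8 * r + 1)
    (h : (2 : ZMod p) ^ (2 * r) = 1) : ∃ w : ZMod p, w ^ 4 = 2 := by
  haveI : Fact p.Prime := ⟨hp⟩
  have hr1 : 1 ≤ r := by have := hp.two_le; omega
  have h2ne : (2 : ZMod p) ≠ 0 := by
    intro h0
    have h2 : ((2 : ℕ) : ZMod p) = 0 := by exact_mod_cast h0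
    rw [ZMod.natCast_eq_zero_iff] at h2
    have := Nat.le_of_dvd (by norm_num) h2
    omega
  set u : (ZMod p)ˣ := Units.mk0 2 h2ne with hu
  have hcard : Fintype.card (ZMod p)ˣ = 8 * r := by
    rw [ZMod.card_units_eq_totient, Nat.totient_prime hp]; omega
  obtain ⟨g, hg⟩ := IsCyclic.exists_generator (α := (ZMod p)ˣ)
  have horder : orderOf g = 8 * r := by
    rw [orderOf_eq_card_of_forall_mem_zpowers hg, Nat.card_eq_fintype_card, hcard]
  obtain ⟨m, hm⟩ := Subgroup.mem_zpowers_iff.mp (hg u)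
  have hu2r : u ^ (2 * r) = 1 := by
    ext
    push_cast
    simpa [hu] using h
  have hgm : g ^ (m * (2 * r : ℕ)) = 1 := by
    rw [zpow_mul, hm]
    exact_mod_cast hu2r
  have hdvd : ((8 * r : ℕ) : ℤ) ∣ m * (2 * r : ℕ) := by
    rw [← horder]
    exact orderOf_dvd_iff_zpow_eq_one.mpr hgm
  obtain ⟨t, ht⟩ := hdvd
  have hm4 : m = 4 * t := by
    have h2r : ((2 * r : ℕ) : ℤ) ≠ 0 := by
      have : (0:ℕ) < 2 * r := by omega
      exact_mod_cast this.ne'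
    apply mul_right_cancel₀ h2r
    push_cast at ht ⊢
    linarith [ht]
  have hfour : (g ^ t) ^ (4 : ℕ) = u := by
    rw [← hm, hm4, ← zpow_natCast (g ^ t), ← zpow_mul]
    norm_num [mul_comm]
  refine ⟨((g ^ t : (ZMod p)ˣ) : ZMod p), ?_⟩
  calc ((g ^ t : (ZMod p)ˣ) : ZMod p) ^ 4 = (((g ^ t) ^ (4:ℕ) : (ZMod p)ˣ) : ZMod p) := by
        push_cast; ring
    _ = 2 := by rw [hfour]; rfl
lemma sq_mod_two (x : ℕ) : x ^ 2 % 2 = x % 2 := by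
  rcases Nat.even_or_odd x with h | h
  · obtain ⟨k, hk⟩ := h
    subst hk
    have : (k + k) ^ 2 = 2 * (2 * k * k) := by ring
    omega
  · obtain ⟨k, hk⟩ := h
    subst hk
    have : (2 * k + 1) ^ 2 = 2 * (2 * k * k + 2 * k) + 1 := by ring
    omega

lemma odd_sq_mod_eight (a : ℕ) (h : a % 2 = 1) : a ^ 2 % 8 = 1 := by
  obtain ⟨k, hk⟩ : ∃ k, a = 2 * k + 1 := ⟨a / 2, by omega⟩
  subst hk
  obtain ⟨j, hj⟩ := Nat.even_mul_succ_self k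
  have h2 : (2 * k + 1) ^ 2 = 4 * (k * (k + 1)) + 1 := by ring
  omega


theorem gauss_biquadratic_two (p : ℕ) (hp : p.Prime) (h8 : p % 8 = 1) :
    (∃ z : ℤ, z ^ 4 ≡ 2 [ZMOD (p : ℤ)]) ↔
      ∃ x y : ℤ, (p : ℤ) = x ^ 2 + 64 * y ^ 2 := by
  haveI : Fact p.Prime := ⟨hp⟩
  have hp2 : 2 ≤ p := hp.two_le
  set r := p / 8 with hr
  have hpr : p = 8 * r + 1 := by omega
  have h2ne : (2 : ZMod p) ≠ 0 := by
    intro h0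
    have h2 : ((2 : ℕ) : ZMod p) = 0 := by exact_mod_cast h0
    rw [ZMod.natCast_eq_zero_iff] at h2
    have := Nat.le_of_dvd (by norm_num) h2
    omega
  constructor
  · rintro ⟨z, hz⟩
    have hz' : ((z ^ 4 : ℤ) : ZMod p) = ((2 : ℤ) : ZMod p) :=
      (ZMod.intCast_eq_intCast_iff _ _ _).mpr hz
    push_cast at hz'
    have hzne : (z : ZMod p) ≠ 0 := by
      intro h0
      rw [h0] at hz'
      exact h2ne (by rw [← hz']; ring)
    have h2r : (2 : ZMod p) ^ (2 * r) = 1 := by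
      rw [← hz', ← pow_mul]
      have he : 4 * (2 * r) = p - 1 := by omega
      rw [he]
      exact ZMod.pow_card_sub_one_eq_one hzne
    obtain ⟨A, B, hAB⟩ := Nat.Prime.sq_add_sq (p := p) (by omega)
    have hA2 := sq_mod_two A
    have hB2 := sq_mod_two B
    have hA8 := odd_sq_mod_eight A
    have hB8 := odd_sq_mod_eight B
    -- exactly one of A, B is odd
    have hpar : (A % 2 = 1 ∧ B % 2 = 0) ∨ (A % 2 = 0 ∧ B % 2 = 1) := by
      have hA' : A % 2 = 0 ∨ A % 2 = 1 := by omega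
      have hB' : B % 2 = 0 ∨ B % 2 = 1 := by omega
      rcases hA' with hA | hA <;> rcases hB' with hB | hB
      · exfalso; omega
      · right; exact ⟨hA, hB⟩
      · left; exact ⟨hA, hB⟩
      · exfalso; specialize hA8 hA; specialize hB8 hB; omega
    -- wlog: get a odd, b even with a^2 + b^2 = p
    obtain ⟨a, b, hab, haodd, hbev⟩ :
        ∃ a b : ℕ, a ^ 2 + b ^ 2 = p ∧ a % 2 = 1 ∧ b % 2 = 0 := by
      rcases hpar with ⟨h1, h2⟩ | ⟨h1, h2⟩
      · exact ⟨A, B, hAB, h1, h2⟩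
      · exact ⟨B, A, by omega, h2, h1⟩
    -- b = 4 * c
    have ha8 := odd_sq_mod_eight a haodd
    obtain ⟨b', hb'⟩ : ∃ b', b = 2 * b' := ⟨b / 2, by omega⟩
    have hb'sq : 4 * b' ^ 2 % 8 = 0 := by
      have : a ^ 2 + 4 * b' ^ 2 = p := by rw [← hab, hb']; ring
      omega
    have hb'ev : b' % 2 = 0 := by
      have := sq_mod_two b'
      omega
    obtain ⟨c, hc⟩ : ∃ c, b = 4 * c := ⟨b' / 2, by omega⟩
    have heq16 : a ^ 2 + 16 * c ^ 2 = p := by rw [← hab, hc]; ring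
    have hkey := key_lemma p r a c hp hpr heq16 haodd
    rw [h2r] at hkey
    -- a * c must be even
    have hcev : c % 2 = 0 := by
      by_contra hco
      have hodd : Odd (a * c) := by
        rw [Nat.odd_iff, Nat.mul_mod, haodd]
        omega
      rw [hodd.neg_one_pow] at hkey
      exact h2ne (by linear_combination hkey)
    obtain ⟨d, hd⟩ : ∃ d, c = 2 * d := ⟨c / 2, by omega⟩
    refine ⟨(a : ℤ), (d : ℤ), ?_⟩
    have : a ^ 2 + 64 * d ^ 2 = p := by rw [← heq16, hd]; ring
    exact_mod_cast this.symm
  · rintro ⟨x, y, hxy⟩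
    set a := x.natAbs with hadef
    set c := 2 * y.natAbs with hcdef
    have heq : a ^ 2 + 16 * c ^ 2 = p := by
      have h1 : (a : ℤ) ^ 2 + 16 * (c : ℤ) ^ 2 = (p : ℤ) := by
        rw [hxy]
        push_cast [hadef, hcdef]
        linear_combination sq_abs x + 64 * sq_abs y
      exact_mod_cast h1
    have ha : a % 2 = 1 := by
      have := sq_mod_two a
      have h16 : (16 * c ^ 2) % 2 = 0 := by omega
      have : a ^ 2 % 2 = 1 := by omega
      omega
    have h1 : (2 : ZMod p) ^ (2 * r) = 1 := by
      rw [key_lemma p r a c hp hpr heq ha]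
      have : a * c = 2 * (a * y.natAbs) := by rw [hcdef]; ring
      rw [this, pow_mul]
      norm_num
    obtain ⟨w, hw⟩ := pow_four_exists p r hp hpr h1
    obtain ⟨z, hz⟩ := ZMod.intCast_surjective (n := p) w
    refine ⟨z, (ZMod.intCast_eq_intCast_iff _ _ _).mp ?_⟩
    push_cast
    rw [hz, hw]
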